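/- Let ρ be a congruence on an inverse semigroup S, and define ρ_min by: a ρ_min b if and only if there exists an idempotent e of S with ae = be, a⁻¹a ρ e, and b⁻¹b ρ e. Then a ρ_min b if and only if there exists c ∈ S with c ≤ a, c ≤ b (in the natural partial order), a ρ c, and c ρ b. -/
import Mathlib


/-- An inverse semigroup: a semigroup with an inverse operation such that
`a * a⁻¹ * a = a`, `a⁻¹ * a * a⁻¹ = a⁻¹`, and idempotents commute. -/
class InverseSemigroup (S : Type*) extends Semigroup S, Inv S where
  mul_inv_mul : ∀ a : S, a * a⁻¹ * a = a
  inv_mul_inv : ∀ a : S, a⁻¹ * a * a⁻¹ = a⁻¹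
  idem_comm : ∀ e f : S, e * e = e → f * f = f → e * f = f * e

/-- The natural partial order on an inverse semigroup: `a ≤ b` iff `a = e * b`
for some idempotent `e`. -/
def natLe {S : Type*} [InverseSemigroup S] (a b : S) : Prop :=
  ∃ e : S, e * e = e ∧ a = e * b

/-- The relation `ρ_min` associated to a congruence `ρ`:
`a ρ_min b` iff there is an idempotent `e` with `a*e = b*e`, `a⁻¹a ρ e` and `b⁻¹b ρ e`. -/
def rhoMin {S : Type*} [InverseSemigroup S] (ρ : Con S) (a b : S) : Prop :=
  ∃ e : S, e * e = e ∧ a * e = b * e ∧ ρ (a⁻¹ * a) e ∧ ρ (b⁻¹ * b) e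

section Aux
variable {S : Type*} [InverseSemigroup S]

open InverseSemigroup

lemma idem_inv_mul (a : S) : (a⁻¹ * a) * (a⁻¹ * a) = a⁻¹ * a := by
  calc (a⁻¹ * a) * (a⁻¹ * a) = (a⁻¹ * a * a⁻¹) * a := by simp [mul_assoc]
    _ = a⁻¹ * a := by rw [inv_mul_inv]

lemma idem_mul_inv (a : S) : (a * a⁻¹) * (a * a⁻¹) = a * a⁻¹ := by
  calc (a * a⁻¹) * (a * a⁻¹) = (a * a⁻¹ * a) * a⁻¹ := by simp [mul_assoc]
    _ = a * a⁻¹ := by rw [mul_inv_mul]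

/-- Uniqueness of inverses. -/
lemma isg_inv_unique (a x : S) (h1 : a * x * a = a) (h2 : x * a * x = x) : x = a⁻¹ := by
  have hy1 : a * a⁻¹ * a = a := mul_inv_mul a
  have hy2 : a⁻¹ * a * a⁻¹ = a⁻¹ := inv_mul_inv a
  have hax : (a * x) * (a * x) = a * x := by
    calc (a * x) * (a * x) = (a * x * a) * x := by simp [mul_assoc]
      _ = a * x := by rw [h1]
  have hay : (a * a⁻¹) * (a * a⁻¹) = a * a⁻¹ := idem_mul_inv a
  have hxa : (x * a) * (x * a) = x * a := by
    calc (x * a) * (x * a) = (x * a * x) * a := by simp [mul_assoc]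
      _ = x * a := by rw [h2]
  have hya : (a⁻¹ * a) * (a⁻¹ * a) = a⁻¹ * a := idem_inv_mul a
  -- y = y * a * x
  have key1 : a⁻¹ = a⁻¹ * a * x := by
    calc a⁻¹ = a⁻¹ * a * a⁻¹ := hy2.symm
      _ = a⁻¹ * ((a * x * a) * a⁻¹) := by rw [h1, ← mul_assoc]
      _ = a⁻¹ * ((a * x) * (a * a⁻¹)) := by simp [mul_assoc]
      _ = a⁻¹ * ((a * a⁻¹) * (a * x)) := by rw [idem_comm _ _ hax hay]
      _ = (a⁻¹ * a * a⁻¹) * (a * x) := by simp [mul_assoc]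
      _ = a⁻¹ * (a * x) := by rw [hy2]
      _ = a⁻¹ * a * x := by rw [mul_assoc]
  have key2 : x = a⁻¹ * a * x := by
    calc x = x * a * x := h2.symm
      _ = x * ((a * a⁻¹ * a) * x) := by rw [hy1]; rw [mul_assoc]
      _ = ((x * a) * (a⁻¹ * a)) * x := by simp [mul_assoc]
      _ = ((a⁻¹ * a) * (x * a)) * x := by rw [idem_comm _ _ hxa hya]
      _ = a⁻¹ * ((a * x * a) * x) := by simp [mul_assoc]
      _ = a⁻¹ * (a * x) := by rw [h1]
      _ = a⁻¹ * a * x := by rw [mul_assoc]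
  rw [key2, ← key1]

/-- Inverse of `f * a` when `f` is idempotent. -/
lemma inv_idem_mul (f a : S) (hf : f * f = f) : (f * a)⁻¹ = a⁻¹ * f := by
  have hcomm : f * (a * a⁻¹) = (a * a⁻¹) * f :=
    InverseSemigroup.idem_comm f (a * a⁻¹) hf (idem_mul_inv a)
  refine (isg_inv_unique (f * a) (a⁻¹ * f) ?_ ?_).symm
  · calc (f * a) * (a⁻¹ * f) * (f * a)
        = f * ((a * a⁻¹) * (f * (f * a))) := by simp [mul_assoc]
      _ = f * ((a * a⁻¹) * (f * a)) := by rw [← mul_assoc f f a, hf]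
      _ = f * (((a * a⁻¹) * f) * a) := by simp [mul_assoc]
      _ = f * ((f * (a * a⁻¹)) * a) := by rw [hcomm]
      _ = (f * f) * ((a * a⁻¹) * a) := by simp [mul_assoc]
      _ = f * (a * a⁻¹ * a) := by rw [hf, mul_assoc]
      _ = f * a := by rw [InverseSemigroup.mul_inv_mul]
  · calc (a⁻¹ * f) * (f * a) * (a⁻¹ * f)
        = a⁻¹ * ((f * f) * ((a * a⁻¹) * f)) := by simp [mul_assoc]
      _ = a⁻¹ * (f * ((a * a⁻¹) * f)) := by rw [hf]
      _ = a⁻¹ * (f * (f * (a * a⁻¹))) := by rw [hcomm]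
      _ = a⁻¹ * ((f * f) * (a * a⁻¹)) := by simp [mul_assoc]
      _ = (a⁻¹ * f) * (a * a⁻¹) := by rw [hf, mul_assoc]
      _ = (a⁻¹ * (f * (a * a⁻¹))) := by simp [mul_assoc]
      _ = (a⁻¹ * ((a * a⁻¹) * f)) := by rw [hcomm]
      _ = (a⁻¹ * a * a⁻¹) * f := by simp [mul_assoc]
      _ = a⁻¹ * f := by rw [InverseSemigroup.inv_mul_inv]

end Aux

/-- `a ρ_min b` iff there exists `c` with `c ≤ a`, `c ≤ b`,
`a ρ c` and `c ρ b`. -/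
theorem stmt0 {S : Type*} [InverseSemigroup S] (ρ : Con S) (a b : S) :
    rhoMin ρ a b ↔ ∃ c : S, natLe c a ∧ natLe c b ∧ ρ a c ∧ ρ c b := by
  constructor
  · rintro ⟨e, he, hab, hρa, hρb⟩
    refine ⟨a * e, ?_, ?_, ?_, ?_⟩
    · -- c ≤ a via idempotent a*e*a⁻¹
      refine ⟨a * e * a⁻¹, ?_, ?_⟩
      · calc (a * e * a⁻¹) * (a * e * a⁻¹)
            = a * (e * ((a⁻¹ * a) * (e * a⁻¹))) := by simp [mul_assoc]
          _ = a * (e * (((a⁻¹ * a) * e) * a⁻¹)) := by simp [mul_assoc]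
          _ = a * (e * ((e * (a⁻¹ * a)) * a⁻¹)) := by
                rw [InverseSemigroup.idem_comm _ _ (idem_inv_mul a) he]
          _ = a * ((e * e) * ((a⁻¹ * a) * a⁻¹)) := by simp [mul_assoc]
          _ = a * (e * (a⁻¹ * a * a⁻¹)) := by rw [he, mul_assoc]
          _ = a * (e * a⁻¹) := by rw [InverseSemigroup.inv_mul_inv]
          _ = a * e * a⁻¹ := by rw [mul_assoc]
      · calc a * e = (a * a⁻¹ * a) * e := by rw [InverseSemigroup.mul_inv_mul]
          _ = a * ((a⁻¹ * a) * e) := by simp [mul_assoc]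
          _ = a * (e * (a⁻¹ * a)) := by
                rw [InverseSemigroup.idem_comm _ _ (idem_inv_mul a) he]
          _ = (a * e * a⁻¹) * a := by simp [mul_assoc]
    · -- c ≤ b via idempotent b*e*b⁻¹, using a*e = b*e
      rw [hab]
      refine ⟨b * e * b⁻¹, ?_, ?_⟩
      · calc (b * e * b⁻¹) * (b * e * b⁻¹)
            = b * (e * ((b⁻¹ * b) * (e * b⁻¹))) := by simp [mul_assoc]
          _ = b * (e * (((b⁻¹ * b) * e) * b⁻¹)) := by simp [mul_assoc]
          _ = b * (e * ((e * (b⁻¹ * b)) * b⁻¹)) := by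
                rw [InverseSemigroup.idem_comm _ _ (idem_inv_mul b) he]
          _ = b * ((e * e) * ((b⁻¹ * b) * b⁻¹)) := by simp [mul_assoc]
          _ = b * (e * (b⁻¹ * b * b⁻¹)) := by rw [he, mul_assoc]
          _ = b * (e * b⁻¹) := by rw [InverseSemigroup.inv_mul_inv]
          _ = b * e * b⁻¹ := by rw [mul_assoc]
      · calc b * e = (b * b⁻¹ * b) * e := by rw [InverseSemigroup.mul_inv_mul]
          _ = b * ((b⁻¹ * b) * e) := by simp [mul_assoc]
          _ = b * (e * (b⁻¹ * b)) := by
                rw [InverseSemigroup.idem_comm _ _ (idem_inv_mul b) he]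
          _ = (b * e * b⁻¹) * b := by simp [mul_assoc]
    · -- ρ a (a*e)
      have := ρ.mul (ρ.refl a) hρa
      have ha : a * (a⁻¹ * a) = a := by
        rw [← mul_assoc, InverseSemigroup.mul_inv_mul]
      rw [ha] at this
      exact this
    · -- ρ (a*e) b
      rw [hab]
      have := ρ.mul (ρ.refl b) hρb
      have hb : b * (b⁻¹ * b) = b := by
        rw [← mul_assoc, InverseSemigroup.mul_inv_mul]
      rw [hb] at this
      exact ρ.symm this
  · rintro ⟨c, ⟨f, hf, hcf⟩, ⟨g, hg, hcg⟩, hac, hcb⟩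
    refine ⟨c⁻¹ * c, idem_inv_mul c, ?_, ?_, ?_⟩
    · -- a * (c⁻¹c) = c = b * (c⁻¹c)
      have h1 : a * (c⁻¹ * c) = c := by
        have hci : c⁻¹ = a⁻¹ * f := by rw [hcf, inv_idem_mul f a hf]
        have hcomm : f * (a * a⁻¹) = (a * a⁻¹) * f :=
          InverseSemigroup.idem_comm f (a * a⁻¹) hf (idem_mul_inv a)
        calc a * (c⁻¹ * c) = a * ((a⁻¹ * f) * (f * a)) := by rw [hci, hcf]
          _ = (a * a⁻¹) * ((f * f) * a) := by simp [mul_assoc]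
          _ = (a * a⁻¹) * (f * a) := by rw [hf]
          _ = ((a * a⁻¹) * f) * a := by rw [← mul_assoc]
          _ = (f * (a * a⁻¹)) * a := by rw [hcomm]
          _ = f * (a * a⁻¹ * a) := by simp [mul_assoc]
          _ = f * a := by rw [InverseSemigroup.mul_inv_mul]
          _ = c := hcf.symm
      have h2 : b * (c⁻¹ * c) = c := by
        have hci : c⁻¹ = b⁻¹ * g := by rw [hcg, inv_idem_mul g b hg]
        have hcomm : g * (b * b⁻¹) = (b * b⁻¹) * g :=
          InverseSemigroup.idem_comm g (b * b⁻¹) hg (idem_mul_inv b)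
        calc b * (c⁻¹ * c) = b * ((b⁻¹ * g) * (g * b)) := by rw [hci, hcg]
          _ = (b * b⁻¹) * ((g * g) * b) := by simp [mul_assoc]
          _ = (b * b⁻¹) * (g * b) := by rw [hg]
          _ = ((b * b⁻¹) * g) * b := by rw [← mul_assoc]
          _ = (g * (b * b⁻¹)) * b := by rw [hcomm]
          _ = g * (b * b⁻¹ * b) := by simp [mul_assoc]
          _ = g * b := by rw [InverseSemigroup.mul_inv_mul]
          _ = c := hcg.symm
      rw [h1, h2]
    · -- ρ (a⁻¹a) (c⁻¹c)
      have := ρ.mul (ρ.refl a⁻¹) hac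
      have heq : a⁻¹ * c = c⁻¹ * c := by
        have hci : c⁻¹ = a⁻¹ * f := by rw [hcf, inv_idem_mul f a hf]
        rw [hci, hcf, mul_assoc, ← mul_assoc f f a, hf]
      rwa [heq] at this
    · -- ρ (b⁻¹b) (c⁻¹c)
      have := ρ.mul (ρ.refl b⁻¹) (ρ.symm hcb)
      have heq : b⁻¹ * c = c⁻¹ * c := by
        have hci : c⁻¹ = b⁻¹ * g := by rw [hcg, inv_idem_mul g b hg]
        rw [hci, hcg, mul_assoc, ← mul_assoc g g b, hg]
      rwa [heq] at this
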